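/- For all integers y ≥ 0 and n ≥ 0, in the field ℚ(q): ∑_{x=1}^{y} [x;q]_n · q^x = (q/[n+1;q]) · [y;q]_{n+1}, where [X;q] = (1−q^X)/(1−q) and [X;q]_n = ∏_{i=0}^{n−1} [X+i;q]. -/
import Mathlib


/-- The `q`-integer `[m;q] = (1 - q^m)/(1 - q)` in `ℚ(q)`, for any integer `m`. -/
noncomputable def qint (m : ℤ) : RatFunc ℚ := (1 - RatFunc.X ^ m) / (1 - RatFunc.X)

/-- `[a;q]_n = ∏_{i=0}^{n−1} [a+i;q]`. -/
noncomputable def qpoch (a : ℤ) (n : ℕ) : RatFunc ℚ := ∏ i ∈ Finset.range n, qint (a + i)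

lemma hX1 : (1 : RatFunc ℚ) - RatFunc.X ≠ 0 := by
  rw [sub_ne_zero]
  intro h
  have := congrArg (RatFunc.eval (RingHom.id ℚ) 0) h
  simp [RatFunc.eval] at this

lemma hXpow (m : ℕ) (hm : m ≠ 0) : (1 : RatFunc ℚ) - RatFunc.X ^ m ≠ 0 := by
  rw [sub_ne_zero]
  intro h
  have : (RatFunc.X : RatFunc ℚ)^m = algebraMap (Polynomial ℚ) _ (Polynomial.X ^ m) := by
    simp
  rw [this] at h
  have h1 : (1 : RatFunc ℚ) = algebraMap (Polynomial ℚ) _ 1 := by simp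
  rw [h1] at h
  have h2 : (1 : Polynomial ℚ) = Polynomial.X ^ m := RatFunc.algebraMap_injective ℚ h
  have := congrArg Polynomial.natDegree h2
  simp [hm] at this
  exact hm this.symm

lemma qint_nat (m : ℕ) : qint (m : ℤ) = (1 - RatFunc.X ^ m) / (1 - RatFunc.X) := by
  rw [qint, zpow_natCast]

-- qint y + qint(n+1) * X^y = qint (y+n+1)
lemma key (y n : ℕ) : qint (y : ℤ) + qint ((n:ℤ)+1) * RatFunc.X ^ y = qint ((y:ℤ) + n + 1) := by
  have h1 : ((n:ℤ)+1) = ((n+1 : ℕ) : ℤ) := by push_cast; ring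
  have h2 : ((y:ℤ) + n + 1) = ((y+n+1 : ℕ) : ℤ) := by push_cast; ring
  rw [h1, h2, qint_nat, qint_nat, qint_nat]
  field_simp
  ring

-- qpoch a (n+1) = qint a * qpoch (a+1) n
lemma qpoch_succ_left (a : ℤ) (n : ℕ) : qpoch a (n+1) = qint a * qpoch (a+1) n := by
  rw [qpoch, Finset.prod_range_succ', qpoch, mul_comm]
  congr 1
  · norm_num
  · exact Finset.prod_congr rfl (fun i _ => by
      congr 1; push_cast; ring)

lemma qpoch_succ_right (a : ℤ) (n : ℕ) : qpoch a (n+1) = qpoch a n * qint (a + n) := by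
  rw [qpoch, Finset.prod_range_succ, qpoch]

/-- For integers `y ≥ 0`, `n ≥ 0`: `∑_{x=1}^{y} [x;q]_n q^x = (q/[n+1;q]) [y;q]_{n+1}`. -/
theorem stmt_14 (y n : ℕ) :
    ∑ x ∈ Finset.Icc 1 y, qpoch (x : ℤ) n * (RatFunc.X : RatFunc ℚ) ^ x
    = RatFunc.X / qint ((n : ℤ) + 1) * qpoch (y : ℤ) (n + 1) := by
  have hq : qint ((n:ℤ)+1) ≠ 0 := by
    have h1 : ((n:ℤ)+1) = ((n+1 : ℕ) : ℤ) := by push_cast; ring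
    rw [h1, qint_nat]
    exact div_ne_zero (hXpow (n+1) (Nat.succ_ne_zero n)) hX1
  induction y with
  | zero =>
    simp only [Nat.cast_zero]
    rw [qpoch_succ_left]
    have : qint 0 = 0 := by
      have : (0:ℤ) = ((0:ℕ):ℤ) := by norm_num
      rw [this, qint_nat]; simp
    simp [this]
  | succ y ih =>
    rw [Finset.sum_Icc_succ_top (by omega), ih]
    have hcast : ((y:ℤ)+1) = (((y+1:ℕ)):ℤ) := by push_cast; ring
    rw [qpoch_succ_left (y:ℤ), ← hcast, qpoch_succ_right ((y:ℤ)+1) n]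
    have hk := key y n
    field_simp
    rw [show ((y:ℤ)+1+n) = ((y:ℤ)+n+1) by ring, ← hk]
    ring
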